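/- Let p be a prime and m ∈ ℕ. For all natural numbers r' ≤ r, the element ⟨p^m r choose p^m r'⟩_{(m),q} of ℚ(q) is a unit in the subring ℤ[q]_{(p,q−1)}. -/
import Mathlib


noncomputable section

open Polynomial

/-- `ℤ[q]`, the polynomial ring in one variable `q` over `ℤ`. -/
abbrev Zq : Type := Polynomial ℤ

/-- `ℚ(q)`, realized as the fraction field of `ℤ[q]`. -/
abbrev Qq : Type := FractionRing Zq

/-- The canonical embedding `ℤ[q] → ℚ(q)`. -/
def ι : Zq →+* Qq := algebraMap Zq Qq

/-- The image of the variable `q` in `ℚ(q)`. -/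
def qQ : Qq := ι X

/-- The `q^a`-integer `(n)_{q^a} = 1 + q^a + ⋯ + q^{a(n-1)}` in `ℤ[q]`. -/
def qInt (a n : ℕ) : Zq := ∑ j ∈ Finset.range n, X ^ (a * j)

/-- The `q^a`-factorial `(n)_{q^a}! = ∏_{i=1}^{n} (i)_{q^a}` in `ℤ[q]`. -/
def qFact (a n : ℕ) : Zq := ∏ i ∈ Finset.range n, qInt a (i + 1)

/-- The prime ideal `(p, q - 1)` of `ℤ[q]`. -/
def pqIdeal (p : ℕ) : Ideal Zq := Ideal.span {C (p : ℤ), X - 1}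

/-- Membership in the localization `ℤ[q]_{(p,q-1)}`, viewed inside `ℚ(q)`:
`x = a / b` with `b ∉ (p, q-1)`. -/
def InLoc (p : ℕ) (x : Qq) : Prop :=
  ∃ a b : Zq, b ∉ pqIdeal p ∧ x * ι b = ι a

/-- Being a unit of the localization `ℤ[q]_{(p,q-1)}`, viewed inside `ℚ(q)`:
`x = a / b` with `a, b ∉ (p, q-1)`. -/
def IsLocUnit (p : ℕ) (x : Qq) : Prop :=
  ∃ a b : Zq, a ∉ pqIdeal p ∧ b ∉ pqIdeal p ∧ x * ι b = ι a

/-- The Gaussian `q`-binomial coefficient `(k choose k')_q` as an element of `ℚ(q)`. -/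
def qBinomF (k k' : ℕ) : Qq :=
  ι (qFact 1 k) / (ι (qFact 1 k') * ι (qFact 1 (k - k')))

/-- The level-`m` coefficient `{k choose k'}_{(m),q}` as an element of `ℚ(q)`. -/
def braceC (p m k k' : ℕ) : Qq :=
  ι (qFact (p ^ m) (k / p ^ m)) /
    (ι (qFact (p ^ m) (k' / p ^ m)) * ι (qFact (p ^ m) ((k - k') / p ^ m)))

/-- The level-`m` coefficient `⟨k choose k'⟩_{(m),q}` as an element of `ℚ(q)`. -/
def angleC (p m k k' : ℕ) : Qq := qBinomF k k' * (braceC p m k k')⁻¹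

lemma qInt_eval_one (a n : ℕ) : (qInt a n).eval 1 = (n : ℤ) := by
  simp [qInt, eval_finset_sum]

lemma qInt_ne_zero (a : ℕ) {n : ℕ} (hn : n ≠ 0) : qInt a n ≠ 0 := by
  intro h
  have h2 := qInt_eval_one a n
  rw [h] at h2
  simp at h2
  exact hn (by exact_mod_cast h2.symm)

lemma qFact_ne_zero (a n : ℕ) : qFact a n ≠ 0 :=
  Finset.prod_ne_zero_iff.mpr fun i _ => qInt_ne_zero a (Nat.succ_ne_zero i)

lemma qInt_mul (a b c : ℕ) : qInt a (b * c) = qInt (a * b) c * qInt a b := by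
  induction c with
  | zero => simp [qInt]
  | succ c ih =>
    have h1 : b * (c + 1) = b * c + b := by ring
    rw [h1]
    unfold qInt at *
    rw [Finset.sum_range_add, Finset.sum_range_succ, add_mul, ← ih, Finset.mul_sum]
    congr 1
    apply Finset.sum_congr rfl
    intro j _
    rw [← pow_add]
    congr 1
    ring

/-- evaluation at q = 1 followed by reduction mod p -/
def φp (p : ℕ) : Zq →+* ZMod p := (Int.castRingHom (ZMod p)).comp (evalRingHom 1)

lemma notMem_pqIdeal {p : ℕ} {x : Zq} (hx : φp p x ≠ 0) : x ∉ pqIdeal p := by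
  intro hmem
  apply hx
  have hsub : pqIdeal p ≤ RingHom.ker (φp p) := by
    rw [pqIdeal, Ideal.span_le]
    intro y hy
    simp only [Set.mem_insert_iff, Set.mem_singleton_iff] at hy
    rcases hy with rfl | rfl <;>
      simp [φp, RingHom.mem_ker, ZMod.natCast_self]
  exact hsub hmem

lemma φp_qInt (p a n : ℕ) : φp p (qInt a n) = (n : ZMod p) := by
  simp [φp, qInt_eval_one]

/-- the "unit part" of the factor `(p^m j + t + 1)_q` -/
def Ublk (p m j t : ℕ) : Zq :=
  qInt (p ^ (t + 1).factorization p)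
    ((p ^ m * j + (t + 1)) / p ^ (t + 1).factorization p)

def Nr (p m r : ℕ) : Zq :=
  ∏ j ∈ Finset.range r, ∏ t ∈ Finset.range (p ^ m - 1), Ublk p m j t

lemma v_lt {p m t : ℕ} (hp : p.Prime) (ht : t + 1 < p ^ m) :
    (t + 1).factorization p < m := by
  have h1 : p ^ ((t + 1).factorization p) ≤ t + 1 := Nat.ordProj_le p (Nat.succ_ne_zero t)
  exact (Nat.pow_lt_pow_iff_right hp.one_lt).mp (h1.trans_lt ht)

lemma ordProj_dvd_blk {p m j t : ℕ} (hp : p.Prime) (ht : t + 1 < p ^ m) :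
    p ^ (t + 1).factorization p ∣ p ^ m * j + (t + 1) := by
  refine dvd_add (dvd_mul_of_dvd_left (pow_dvd_pow p ?_) j) (Nat.ordProj_dvd _ p)
  exact (v_lt hp ht).le

lemma blk {p : ℕ} (hp : p.Prime) (m j t : ℕ) (ht : t + 1 < p ^ m) :
    qInt 1 (p ^ m * j + (t + 1)) =
      Ublk p m j t * qInt 1 (p ^ (t + 1).factorization p) := by
  have hd := ordProj_dvd_blk hp ht (m := m) (j := j)
  have he : p ^ m * j + (t + 1) =
      p ^ (t + 1).factorization p *
        ((p ^ m * j + (t + 1)) / p ^ (t + 1).factorization p) :=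
    (Nat.mul_div_cancel' hd).symm
  rw [he, qInt_mul, one_mul, Ublk]

lemma not_dvd_quot {p m j t : ℕ} (hp : p.Prime) (ht : t + 1 < p ^ m) :
    ¬ p ∣ (p ^ m * j + (t + 1)) / p ^ (t + 1).factorization p := by
  intro hdvd
  set v := (t + 1).factorization p with hv
  have hd := ordProj_dvd_blk hp ht (m := m) (j := j)
  have h1 : p ^ (v + 1) ∣ p ^ m * j + (t + 1) := by
    obtain ⟨k, hk⟩ := hdvd
    refine ⟨k, ?_⟩
    rw [pow_succ]
    calc p ^ m * j + (t + 1)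
        = p ^ v * ((p ^ m * j + (t + 1)) / p ^ v) := (Nat.mul_div_cancel' hd).symm
      _ = p ^ v * (p * k) := by rw [hk]
      _ = p ^ v * p * k := by ring
  have h2 : p ^ (v + 1) ∣ p ^ m * j :=
    dvd_mul_of_dvd_left (pow_dvd_pow p (v_lt hp ht)) j
  have h3 : p ^ (v + 1) ∣ t + 1 := by
    have := Nat.dvd_sub h1 h2
    simpa using this
  exact Nat.pow_succ_factorization_not_dvd (Nat.succ_ne_zero t) hp h3

lemma φp_Ublk_ne_zero {p : ℕ} (hp : p.Prime) (m j t : ℕ) (ht : t + 1 < p ^ m) :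
    φp p (Ublk p m j t) ≠ 0 := by
  rw [Ublk, φp_qInt]
  haveI : NeZero p := ⟨hp.ne_zero⟩
  rw [Ne, ZMod.natCast_eq_zero_iff]
  exact not_dvd_quot hp ht

lemma φp_Nr_ne_zero {p : ℕ} (hp : p.Prime) (m r : ℕ) :
    φp p (Nr p m r) ≠ 0 := by
  haveI := Fact.mk hp
  rw [Nr, map_prod]
  refine Finset.prod_ne_zero_iff.mpr fun j _ => ?_
  rw [map_prod]
  refine Finset.prod_ne_zero_iff.mpr fun t htmem => ?_
  have hpm : 1 ≤ p ^ m := Nat.one_le_pow _ _ hp.pos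
  have ht : t + 1 < p ^ m := by
    have := Finset.mem_range.mp htmem
    omega
  exact φp_Ublk_ne_zero hp m j t ht

lemma Nr_notMem {p : ℕ} (hp : p.Prime) (m r : ℕ) : Nr p m r ∉ pqIdeal p :=
  notMem_pqIdeal (φp_Nr_ne_zero hp m r)

def Dd (p m : ℕ) : Zq := ∏ t ∈ Finset.range (p ^ m - 1), qInt 1 (p ^ (t + 1).factorization p)

lemma factor_fact {p : ℕ} (hp : p.Prime) (m r : ℕ) :
    qFact 1 (p ^ m * r) =
      qFact (p ^ m) r * (qInt 1 (p ^ m)) ^ r * Nr p m r * (Dd p m) ^ r := by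
  induction r with
  | zero => simp [qFact, Nr]
  | succ r ih =>
    have hpm : 1 ≤ p ^ m := Nat.one_le_pow _ _ hp.pos
    have h1 : p ^ m * (r + 1) = p ^ m * r + p ^ m := by ring
    have h2 : p ^ m = (p ^ m - 1) + 1 := by omega
    rw [h1]
    unfold qFact
    rw [Finset.prod_range_add]
    have hrange : Finset.range (p ^ m) = insert (p ^ m - 1) (Finset.range (p ^ m - 1)) := by
      rw [← Finset.range_add_one]
      exact congrArg Finset.range h2
    have hblock : ∏ t ∈ Finset.range (p ^ m), qInt 1 (p ^ m * r + t + 1) =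
        (∏ t ∈ Finset.range (p ^ m - 1), Ublk p m r t) * Dd p m *
          (qInt (p ^ m) (r + 1) * qInt 1 (p ^ m)) := by
      rw [hrange, Finset.prod_insert Finset.notMem_range_self]
      have hlast : p ^ m * r + (p ^ m - 1) + 1 = p ^ m * (r + 1) := by
        rw [Nat.mul_add, Nat.mul_one]
        omega
      rw [hlast, qInt_mul, one_mul, mul_comm]
      congr 1
      rw [Dd, ← Finset.prod_mul_distrib]
      apply Finset.prod_congr rfl
      intro t htmem
      have ht : t + 1 < p ^ m := by
        have := Finset.mem_range.mp htmem; omega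
      have := blk hp m r t ht
      rw [add_assoc]
      exact this
    rw [show (∏ x ∈ Finset.range (p ^ m * r), qInt 1 (x + 1)) = qFact 1 (p ^ m * r) from rfl,
      ih]
    have hN : Nr p m (r + 1) = Nr p m r * ∏ t ∈ Finset.range (p ^ m - 1), Ublk p m r t := by
      rw [Nr, Finset.prod_range_succ]; rfl
    have hG : ∏ i ∈ Finset.range (r + 1), qInt (p ^ m) (i + 1) =
        qFact (p ^ m) r * qInt (p ^ m) (r + 1) := Finset.prod_range_succ _ _
    calc qFact (p ^ m) r * qInt 1 (p ^ m) ^ r * Nr p m r * Dd p m ^ r *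
          ∏ t ∈ Finset.range (p ^ m), qInt 1 (p ^ m * r + t + 1)
        = qFact (p ^ m) r * qInt 1 (p ^ m) ^ r * Nr p m r * Dd p m ^ r *
          ((∏ t ∈ Finset.range (p ^ m - 1), Ublk p m r t) * Dd p m *
            (qInt (p ^ m) (r + 1) * qInt 1 (p ^ m))) := by rw [hblock]
      _ = (qFact (p ^ m) r * qInt (p ^ m) (r + 1)) * qInt 1 (p ^ m) ^ (r + 1) *
          (Nr p m r * ∏ t ∈ Finset.range (p ^ m - 1), Ublk p m r t) * Dd p m ^ (r + 1) := by
          ring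
      _ = _ := by rw [← hG, ← hN]

lemma key_poly {p : ℕ} (hp : p.Prime) (m r' d : ℕ) :
    qFact 1 (p ^ m * (r' + d)) * (qFact (p ^ m) r' * qFact (p ^ m) d) *
        (Nr p m r' * Nr p m d) =
      Nr p m (r' + d) * (qFact 1 (p ^ m * r') * qFact 1 (p ^ m * d)) *
        qFact (p ^ m) (r' + d) := by
  rw [factor_fact hp m (r' + d), factor_fact hp m r', factor_fact hp m d,
    pow_add, pow_add]
  ring

set_option synthInstance.maxHeartbeats 1000000 in
/-- For `r' ≤ r`, the element `⟨p^m r choose p^m r'⟩_{(m),q}` is a unit of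
`ℤ[q]_{(p,q-1)}`. -/
theorem stmt13 (p : ℕ) (hp : p.Prime) (m r r' : ℕ) (h : r' ≤ r) :
    IsLocUnit p (angleC p m (p ^ m * r) (p ^ m * r')) := by
  haveI := Fact.mk hp
  obtain ⟨d, rfl⟩ : ∃ d, r = r' + d := ⟨r - r', (Nat.add_sub_cancel' h).symm⟩
  have hπ : 0 < p ^ m := pow_pos hp.pos m
  refine ⟨Nr p m (r' + d), Nr p m r' * Nr p m d, Nr_notMem hp m _, ?_, ?_⟩
  · apply notMem_pqIdeal
    rw [map_mul]
    exact mul_ne_zero (φp_Nr_ne_zero hp m r') (φp_Nr_ne_zero hp m d)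
  · have hsub : p ^ m * (r' + d) - p ^ m * r' = p ^ m * d := by
      rw [← Nat.mul_sub]
      congr 1
      omega
    have hdiv1 : p ^ m * (r' + d) / p ^ m = r' + d := Nat.mul_div_cancel_left _ hπ
    have hdiv2 : p ^ m * r' / p ^ m = r' := Nat.mul_div_cancel_left _ hπ
    have hdiv3 : p ^ m * d / p ^ m = d := Nat.mul_div_cancel_left _ hπ
    have hinj : Function.Injective ι := IsFractionRing.injective Zq Qq
    have hne : ∀ x : Zq, x ≠ 0 → ι x ≠ 0 := fun x hx => by
      rwa [Ne, map_eq_zero_iff ι hinj]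
    have hF1 := hne _ (qFact_ne_zero 1 (p ^ m * r'))
    have hF2 := hne _ (qFact_ne_zero 1 (p ^ m * d))
    have hG0 := hne _ (qFact_ne_zero (p ^ m) (r' + d))
    have hG1 := hne _ (qFact_ne_zero (p ^ m) r')
    have hG2 := hne _ (qFact_ne_zero (p ^ m) d)
    rw [angleC, qBinomF, braceC, hsub, hdiv1, hdiv2, hdiv3]
    field_simp
    simp only [← map_mul]
    exact congrArg ι (by linear_combination key_poly hp m r' d)
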